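/- In the Clifford algebra on n generators with e_i e_j + e_j e_i = 2 δ_{ij}, for a strictly increasing sequence A = (a_1,…,a_k) and indices a_p, a_q ∈ A with p < q, one has e_{A∖{a_p,a_q}} e_A = (-1)^{k(k-1)/2} (-1)^{p+q} e_{a_p} e_{a_q}. -/

import Mathlib

section Aux
variable {R : Type} [Ring R]

private lemma negOnePow_comm (n : ℕ) (z : R) : z * (-1:R)^n = (-1:R)^n * z :=
  ((Commute.neg_one_left z).pow_left n).eq.symm

private lemma negOnePow_mul_comm (n : ℕ) (z w : R) :
    z * ((-1:R)^n * w) = (-1:R)^n * (z * w) := by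
  rw [← mul_assoc, negOnePow_comm, mul_assoc]

/-- Moving an element that anticommutes with everything in `l` through `l.prod`. -/
private lemma commThrough (x : R) : ∀ (l : List R), (∀ y ∈ l, y * x = -(x * y)) →
    l.prod * x = (-1 : R) ^ l.length * (x * l.prod) := by
  intro l
  induction l with
  | nil => simp
  | cons y t ih =>
    intro h
    have hy := h y (by simp)
    have ht : ∀ z ∈ t, z * x = -(x * z) := fun z hz => h z (by simp [hz])
    calc (y :: t).prod * x = y * (t.prod * x) := by rw [List.prod_cons, mul_assoc]
      _ = y * ((-1:R)^t.length * (x * t.prod)) := by rw [ih ht]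
      _ = (-1:R)^t.length * ((y * x) * t.prod) := by
          rw [negOnePow_mul_comm, mul_assoc]
      _ = (-1:R)^t.length * (-(x * y) * t.prod) := by rw [hy]
      _ = (-1:R)^(t.length+1) * (x * (y :: t).prod) := by
          rw [List.prod_cons, pow_succ]
          simp [mul_assoc, neg_mul, mul_neg]

private lemma triangle_succ (m : ℕ) : (m+1)*m/2 = m + m*(m-1)/2 := by
  obtain ⟨c, hc⟩ : ∃ c, m*(m-1) = 2*c := by
    rcases Nat.even_or_odd m with h | h
    · obtain ⟨j, hj⟩ := h; exact ⟨j * (m-1), by rw [hj]; ring⟩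
    · obtain ⟨j, hj⟩ := h
      exact ⟨m * j, by rw [hj]; simp [Nat.add_sub_cancel]; ring⟩
  have h1 : (m+1)*m = m*(m-1) + 2*m := by
    cases m with
    | zero => rfl
    | succ j => simp only [Nat.add_sub_cancel]; ring
  omega

/-- Square of a product of pairwise-anticommuting square-one elements. -/
private lemma prodSq {k : ℕ} (f : Fin k → R) (hsq : ∀ i, f i * f i = 1)
    (hanti : ∀ i j, i ≠ j → f i * f j = -(f j * f i)) :
    ∀ (l : List (Fin k)), l.Nodup →
      (l.map f).prod * (l.map f).prod = (-1 : R) ^ (l.length * (l.length - 1) / 2) := by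
  intro l
  induction l with
  | nil => simp
  | cons i t ih =>
    intro hnd
    have hit : i ∉ t := (List.nodup_cons.mp hnd).1
    have hndt : t.Nodup := (List.nodup_cons.mp hnd).2
    have hmove : (t.map f).prod * f i = (-1:R)^t.length * (f i * (t.map f).prod) := by
      have := commThrough (f i) (t.map f) (by
        intro y hy
        obtain ⟨j, hj, rfl⟩ := List.mem_map.mp hy
        exact hanti j i (fun h => hit (h ▸ hj)))
      simpa using this
    calc ((i :: t).map f).prod * ((i :: t).map f).prod
        = f i * ((t.map f).prod * f i) * (t.map f).prod := by
          simp [List.prod_cons, mul_assoc]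
      _ = f i * ((-1:R)^t.length * (f i * (t.map f).prod)) * (t.map f).prod := by rw [hmove]
      _ = (-1:R)^t.length * ((f i * f i) * ((t.map f).prod * (t.map f).prod)) := by
          simp only [mul_assoc, negOnePow_mul_comm]
      _ = (-1:R)^t.length * ((t.map f).prod * (t.map f).prod) := by rw [hsq, one_mul]
      _ = (-1:R)^t.length * (-1:R)^(t.length * (t.length - 1) / 2) := by rw [ih hndt]
      _ = (-1:R)^((i :: t).length * ((i :: t).length - 1) / 2) := by
          rw [← pow_add, List.length_cons]
          congr 1
          have h1 : t.length + 1 - 1 = t.length := rfl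
          rw [h1]
          have := triangle_succ t.length
          omega

end Aux

/-- Ordered product `e_A = e_{a₁} ⋯ e_{a_k}` of Clifford generators. -/
def eProd {R : Type} [Ring R] {n k : ℕ} (e : Fin n → R) (a : Fin k → Fin n) : R :=
  (List.ofFn fun i => e (a i)).prod

/-- Ordered product `e_{A∖{a_p,a_q}}` of the Clifford generators of `A` with the
`p`-th and `q`-th entries removed. -/
def eDel {R : Type} [Ring R] {n k : ℕ} (e : Fin n → R) (a : Fin k → Fin n)
    (p q : Fin k) : R :=
  (((List.finRange k).filter fun i => i ≠ p ∧ i ≠ q).map fun i => e (a i)).prod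

/-- For a strictly increasing sequence `A = (a₁,…,a_k)` and positions `p < q`,
`e_{A∖{a_p,a_q}} e_A = (-1)^{k(k-1)/2} (-1)^{p+q} e_{a_p} e_{a_q}` in the Clifford algebra. -/
theorem stmt5 {R : Type} [Ring R] [Algebra ℂ R] {n k : ℕ} (e : Fin n → R)
    (he : ∀ i j, e i * e j + e j * e i = if i = j then 2 else 0)
    (a : Fin k → Fin n) (ha : StrictMono a) (p q : Fin k) (hpq : p < q) :
    eDel e a p q * eProd e a =
      (-1 : R) ^ (k * (k - 1) / 2) * (-1 : R) ^ (p.val + q.val) * (e (a p) * e (a q)) := by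
  -- basic Clifford facts
  have hsq : ∀ i, e i * e i = 1 := by
    intro i
    have h := he i i
    rw [if_pos rfl] at h
    have h2 : (2:ℂ) • (e i * e i) = (2:ℂ) • (1:R) := by
      rw [two_smul, two_smul, h]
      norm_num [Algebra.smul_def]
    have := congrArg (fun z => ((2:ℂ)⁻¹) • z) h2
    simpa [smul_smul] using this
  have hanti : ∀ i j, i ≠ j → e i * e j = -(e j * e i) := by
    intro i j hij
    have h := he i j
    rw [if_neg hij] at h
    exact eq_neg_of_add_eq_zero_left h
  set f : Fin k → R := fun i => e (a i) with hf
  have hfsq : ∀ i, f i * f i = 1 := fun i => hsq _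
  have hfanti : ∀ i j : Fin k, i ≠ j → f i * f j = -(f j * f i) :=
    fun i j h => hanti _ _ (fun hc => h (ha.injective hc))
  have hpq' : p.val < q.val := hpq
  have hqk : q.val < k := q.isLt
  -- the decomposition of finRange k
  set L := List.finRange k with hL
  have hLlen : L.length = k := List.length_finRange
  set A := L.take p.val with hA
  set B := (L.drop (p.val+1)).take (q.val - p.val - 1) with hB
  set C := L.drop (q.val+1) with hC
  have hgetL : ∀ (i : ℕ) (h : i < L.length), L[i] = ⟨i, by omega⟩ := by
    intro i h; simp [hL]
  have hdec : L = A ++ p :: (B ++ q :: C) := by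
    have h1 : L = A ++ L.drop p.val := (List.take_append_drop _ _).symm
    have h2 : L.drop p.val = p :: L.drop (p.val + 1) := by
      rw [List.drop_eq_getElem_cons (by omega)]
      congr 1
      rw [hgetL]
    have h3 : L.drop (p.val+1) = B ++ (L.drop (p.val+1)).drop (q.val - p.val - 1) :=
      (List.take_append_drop _ _).symm
    have h4 : (L.drop (p.val+1)).drop (q.val - p.val - 1) = L.drop q.val := by
      rw [List.drop_drop]
      congr 1
      omega
    have h5 : L.drop q.val = q :: C := by
      rw [List.drop_eq_getElem_cons (by omega)]
      congr 1
      rw [hgetL]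
    rw [h1, h2, h3, h4, h5]
  -- membership bounds
  have hmemA : ∀ x ∈ A, x.val < p.val := by
    intro x hx
    rw [hA, List.mem_take_iff_getElem] at hx
    obtain ⟨i, hi, rfl⟩ := hx
    rw [hgetL i (by omega)]
    simp at hi ⊢
    omega
  have hmemB : ∀ x ∈ B, p.val < x.val ∧ x.val < q.val := by
    intro x hx
    rw [hB, List.mem_take_iff_getElem] at hx
    obtain ⟨i, hi, rfl⟩ := hx
    rw [List.getElem_drop, hgetL (p.val + 1 + i) (by simp at hi ⊢; omega)]
    simp at hi ⊢
    omega
  have hmemC : ∀ x ∈ C, q.val < x.val := by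
    intro x hx
    rw [hC] at hx
    rw [List.mem_iff_getElem] at hx
    obtain ⟨i, hi, rfl⟩ := hx
    rw [List.getElem_drop, hgetL (q.val + 1 + i) (by simp at hi ⊢; omega)]
    simp at hi ⊢
    omega
  -- the filtered list
  set D : List (Fin k) := A ++ (B ++ C) with hD
  have hfilter : (L.filter fun i => i ≠ p ∧ i ≠ q) = D := by
    rw [hdec]
    rw [List.filter_append, List.filter_cons, List.filter_append, List.filter_cons]
    have hP : ¬ ((p ≠ p ∧ p ≠ q) : Prop) := by simp
    have hQ : ¬ ((q ≠ p ∧ q ≠ q) : Prop) := by simp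
    rw [if_neg (by simpa using hP), if_neg (by simpa using hQ)]
    have fA : A.filter (fun i => i ≠ p ∧ i ≠ q) = A := List.filter_eq_self.mpr (by
      intro x hx
      have := hmemA x hx
      simp only [decide_eq_true_eq]
      constructor <;> (intro h; subst h; omega))
    have fB : B.filter (fun i => i ≠ p ∧ i ≠ q) = B := List.filter_eq_self.mpr (by
      intro x hx
      have := hmemB x hx
      simp only [decide_eq_true_eq]
      constructor <;> (intro h; subst h; omega))
    have fC : C.filter (fun i => i ≠ p ∧ i ≠ q) = C := List.filter_eq_self.mpr (by
      intro x hx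
      have := hmemC x hx
      simp only [decide_eq_true_eq]
      constructor <;> (intro h; subst h; omega))
    rw [fA, fB, fC, hD]
  -- lengths
  have hlenA : A.length = p.val := by rw [hA]; simp [hLlen]; try omega
  have hlenB : B.length = q.val - p.val - 1 := by rw [hB]; simp [hLlen]; try omega
  have hlenC : C.length = k - q.val - 1 := by rw [hC]; simp [hLlen]; try omega
  have hlenD : D.length = k - 2 := by rw [hD]; simp [hlenA, hlenB, hlenC]; try omega
  -- Nodup of D
  have hndL : L.Nodup := List.nodup_finRange k
  have hndD : D.Nodup := by rw [← hfilter]; exact hndL.filter _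
  -- anticommuting-through helpers
  have moveThrough : ∀ (l : List (Fin k)) (x : Fin k), x ∉ l →
      (l.map f).prod * f x = (-1:R)^l.length * (f x * (l.map f).prod) := by
    intro l x hx
    have := commThrough (f x) (l.map f) (by
      intro y hy
      obtain ⟨j, hj, rfl⟩ := List.mem_map.mp hy
      exact hfanti j x (fun h => hx (h ▸ hj)))
    simpa using this
  -- positions p and q are not in A, B, C
  have hpA : p ∉ A := fun h => absurd (hmemA p h) (by omega)
  have hpB : p ∉ B := fun h => absurd (hmemB p h).1 (by omega)
  have hpC : p ∉ C := fun h => absurd (hmemC p h) (by omega)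
  have hqA : q ∉ A := fun h => absurd (hmemA q h) (by omega)
  have hqB : q ∉ B := fun h => absurd (hmemB q h).2 (by omega)
  have hqC : q ∉ C := fun h => absurd (hmemC q h) (by omega)
  have hpD : p ∉ D := by rw [hD]; simp [hpA, hpB, hpC]
  have hqD : q ∉ D := by rw [hD]; simp [hqA, hqB, hqC]
  -- products
  set PA := (A.map f).prod with hPA
  set PB := (B.map f).prod with hPB
  set PC := (C.map f).prod with hPC
  set PD := (D.map f).prod with hPD
  have hPDdef : PD = PA * (PB * PC) := by rw [hPD, hD]; simp [List.map_append, List.prod_append]; rfl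
  have heDel : eDel e a p q = PD := by
    rw [eDel, hPD, ← hfilter]
  have heProd : eProd e a = PA * (f p * (PB * (f q * PC))) := by
    rw [eProd, List.ofFn_eq_map, ← hL, hdec]
    simp [List.map_append, List.prod_append, List.map_cons, List.prod_cons, mul_assoc]; rfl
  -- move f q left past PB
  have step1 : PB * (f q * PC) = (-1:R)^B.length * (f q * (PB * PC)) := by
    rw [← mul_assoc, moveThrough B q hqB, mul_assoc, mul_assoc]
  -- the pair (f p * f q) passes any list avoiding p and q freely
  have pairPass : ∀ (l : List (Fin k)), p ∉ l → q ∉ l →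
      (l.map f).prod * (f p * f q) = (f p * f q) * (l.map f).prod := by
    intro l hp hq
    rw [← mul_assoc, moveThrough l p hp, mul_assoc, mul_assoc, moveThrough l q hq,
      negOnePow_mul_comm, ← mul_assoc, ← pow_add, ← two_mul, pow_mul, neg_one_sq,
      one_pow, one_mul, mul_assoc]
  have step2 : eProd e a = (-1:R)^B.length * ((f p * f q) * PD) := by
    rw [heProd, step1, negOnePow_mul_comm, negOnePow_mul_comm]
    congr 1
    calc PA * (f p * (f q * (PB * PC))) = (PA * (f p * f q)) * (PB * PC) := by
          rw [mul_assoc, mul_assoc]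
      _ = ((f p * f q) * PA) * (PB * PC) := by rw [pairPass A hpA hqA]
      _ = (f p * f q) * PD := by rw [hPDdef, mul_assoc]
  -- square of PD
  have hPDsq : PD * PD = (-1:R)^((k-2) * (k-2-1) / 2) := by
    rw [hPD, prodSq f hfsq hfanti D hndD, hlenD]
  -- final computation
  have main : eDel e a p q * eProd e a
      = ((-1:R)^B.length * (-1:R)^((k-2) * (k-2-1) / 2)) * (f p * f q) := by
    rw [heDel, step2, negOnePow_mul_comm]
    conv_rhs => rw [mul_assoc]
    congr 1
    calc PD * ((f p * f q) * PD) = ((f p * f q) * PD) * PD := by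
          rw [← mul_assoc, pairPass D hpD hqD]
      _ = (f p * f q) * (PD * PD) := by rw [mul_assoc]
      _ = (-1:R)^((k-2) * (k-2-1) / 2) * (f p * f q) := by rw [hPDsq, negOnePow_comm]
  rw [main, hlenB]
  have hsigns : ((-1:R)^(q.val - p.val - 1) * (-1:R)^((k-2) * (k-2-1) / 2))
      = (-1 : R) ^ (k * (k - 1) / 2) * (-1 : R) ^ (p.val + q.val) := by
    rw [← pow_add, ← pow_add, neg_one_pow_eq_pow_mod_two, neg_one_pow_eq_pow_mod_two
      (n := k * (k-1)/2 + (p.val + q.val))]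
    congr 1
    obtain ⟨m, rfl⟩ : ∃ m, k = m + 2 := ⟨k - 2, by omega⟩
    obtain ⟨c, hc⟩ : ∃ c, m*(m-1) = 2*c := by
      rcases Nat.even_or_odd m with h | h
      · obtain ⟨j, hj⟩ := h; exact ⟨j * (m-1), by rw [hj]; ring⟩
      · obtain ⟨j, hj⟩ := h
        exact ⟨m * j, by rw [hj]; simp [Nat.add_sub_cancel]; ring⟩
    have e1 : m + 2 - 1 = m + 1 := by omega
    have e2 : m + 2 - 2 = m := by omega
    rw [e1, e2]
    have h1 : (m+2)*(m+1) = m*(m-1) + 4*m+2 := by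
      cases m with
      | zero => rfl
      | succ j => simp only [Nat.add_sub_cancel]; ring
    omega
  rw [hsigns]
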